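/- Let A be a commutative Noetherian ring and let I be an ideal of A such that the trace ideal tr_A(I) contains a nonzerodivisor of A. Then I contains a nonzerodivisor of A. -/

import Mathlib

set_option maxHeartbeats 1000000
set_option synthInstance.maxHeartbeats 400000

open CategoryTheory

universe u

/-- The `i`-th Ext module `Ext_A^i(M, N)` over a commutative ring `A`. -/
noncomputable def ExtModule (A : Type u) [CommRing A] (M N : Type u)
    [AddCommGroup M] [Module A M] [AddCommGroup N] [Module A N] (i : ℕ) : ModuleCat.{u} A :=
  ((Ext A (ModuleCat.{u} A) i).obj (Opposite.op (ModuleCat.of A M))).obj (ModuleCat.of A N)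

/-- A module is torsion-free if nonzerodivisors of the ring act injectively. -/
def IsTorsionFreeModule (A : Type*) [CommRing A] (M : Type*) [AddCommGroup M]
    [Module A M] : Prop :=
  ∀ a ∈ nonZeroDivisors A, ∀ m : M, a • m = 0 → m = 0

/-- The grade of an ideal `J`: the length of a maximal regular sequence contained in `J`. -/
noncomputable def Ideal.grade {A : Type*} [CommRing A] (J : Ideal A) : ℕ∞ :=
  sSup {n : ℕ∞ | ∃ rs : List A, (rs.length : ℕ∞) = n ∧ (∀ r ∈ rs, r ∈ J) ∧
    RingTheory.Sequence.IsWeaklyRegular A rs}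

/-- A Cohen–Macaulay local ring: Noetherian local with depth equal to Krull dimension. -/
def IsCohenMacaulayLocalRing (A : Type*) [CommRing A] : Prop :=
  IsNoetherianRing A ∧ ∃ _ : IsLocalRing A,
    ((IsLocalRing.maximalIdeal A).grade : WithBot ℕ∞) = ringKrullDim A

/-- A Cohen–Macaulay ring: Noetherian, all localizations at primes are CM local rings. -/
def IsCohenMacaulayRing (A : Type*) [CommRing A] : Prop :=
  IsNoetherianRing A ∧ ∀ (p : Ideal A) [p.IsPrime],
    IsCohenMacaulayLocalRing (Localization.AtPrime p)

/-- A Gorenstein local ring: Noetherian local of finite self-injective dimension,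
expressed via vanishing of `Ext^{n+1}(A/I, A)` for all ideals `I` (Baer's criterion). -/
def IsGorensteinLocalRing (A : Type u) [CommRing A] : Prop :=
  IsLocalRing A ∧ IsNoetherianRing A ∧
    ∃ n : ℕ, ∀ I : Ideal A, Subsingleton (ExtModule A (A ⧸ I) A (n + 1))

/-- A Gorenstein ring: Noetherian, all localizations at maximal ideals are Gorenstein local. -/
def IsGorensteinRing (A : Type u) [CommRing A] : Prop :=
  IsNoetherianRing A ∧ ∀ (m : Ideal A) [m.IsMaximal],
    IsGorensteinLocalRing (Localization.AtPrime m)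

/-- Generically Gorenstein: the localization at every associated prime is Gorenstein. -/
def IsGenericallyGorenstein (A : Type u) [CommRing A] : Prop :=
  ∀ (p : Ideal A) [p.IsPrime], p ∈ associatedPrimes A A →
    IsGorensteinLocalRing (Localization.AtPrime p)

/-- The trace ideal of a module: the sum of the images of all linear maps to the ring. -/
def traceIdeal (A : Type*) [CommRing A] (M : Type*) [AddCommGroup M] [Module A M] :
    Ideal A :=
  ⨆ f : M →ₗ[A] A, LinearMap.range f

/-- The image of an ideal inside the total ring of fractions. -/
noncomputable def Ideal.toFrac {A : Type u} [CommRing A] (I : Ideal A) :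
    Submodule A (FractionRing A) :=
  Submodule.map (Algebra.linearMap A (FractionRing A)) I

/-- The conductor `(R : S)` of a birational extension `R ⊆ S ⊆ Q(R)`,
as a submodule of the total ring of fractions. -/
noncomputable def conductorFrac (R : Type u) [CommRing R]
    (S : Subalgebra R (FractionRing R)) : Submodule R (FractionRing R) :=
  (1 : Submodule R (FractionRing R)) / Subalgebra.toSubmodule S

/-- `M ∈ Ω CM(A)`: there is an exact sequence `0 → M → P → N → 0` with `P` a finitely
generated projective `A`-module and `N` a finitely generated torsion-free
(equivalently, over a 1-dimensional CM ring, maximal Cohen–Macaulay) `A`-module. -/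
def InSyzygyOfCM (A : Type u) [CommRing A] (M : Type u) [AddCommGroup M] [Module A M] :
    Prop :=
  ∃ (P N : Type u) (_ : AddCommGroup P) (_ : Module A P) (_ : AddCommGroup N)
    (_ : Module A N), Module.Projective A P ∧ Module.Finite A P ∧ Module.Finite A N ∧
      IsTorsionFreeModule A N ∧
      ∃ (f : M →ₗ[A] P) (g : P →ₗ[A] N),
        Function.Injective f ∧ Function.Surjective g ∧ LinearMap.range f = LinearMap.ker g

section AuxAss

variable {R : Type*} [CommRing R] [IsNoetherianRing R] {M : Type*} [AddCommGroup M] [Module R M]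

lemma aux_isAssociatedPrime_iff {I : Ideal R} : IsAssociatedPrime I M ↔
    I.IsPrime ∧ ∃ x : M, I = (Submodule.span R ({x} : Set M)).annihilator := by
  rw [isAssociatedPrime_iff]
  have : ∀ x : M, (⊥ : Submodule R M).colon {x} = (Submodule.span R ({x} : Set M)).annihilator := by
    intro x
    ext r
    rw [Submodule.mem_colon_singleton, Submodule.mem_bot,
      Submodule.mem_annihilator_span_singleton]
  simp only [this]

/-- If a cyclic submodule `R ∙ x` has prime annihilator `p`, then its only possible
associated prime is `p`. -/
lemma aux_assoc_span_singleton {p : Ideal R} (hp : p.IsPrime) {x : M}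
    (hx : (Submodule.span R ({x} : Set M)).annihilator = p) {q : Ideal R}
    (hq : IsAssociatedPrime q (Submodule.span R ({x} : Set M) : Submodule R M)) : q = p := by
  obtain ⟨hq1, y, rfl⟩ := aux_isAssociatedPrime_iff.mp hq
  obtain ⟨c, hc⟩ := Submodule.mem_span_singleton.mp y.2
  have hy0 : (y : M) ≠ 0 := by
    intro h0
    apply hq1.ne_top
    rw [eq_top_iff]
    intro r _
    rw [Submodule.mem_annihilator_span_singleton]
    ext
    simp [h0]
  have hcp : c ∉ p := by
    intro hcp
    apply hy0
    rw [← hc]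
    rw [← hx, Submodule.mem_annihilator_span_singleton] at hcp
    exact hcp
  ext r
  rw [Submodule.mem_annihilator_span_singleton]
  constructor
  · intro hr
    have : (r * c) • x = 0 := by
      rw [mul_smul, hc]
      exact congrArg Subtype.val hr
    rw [← Submodule.mem_annihilator_span_singleton, hx] at this
    rcases hp.mem_or_mem this with h | h
    · exact h
    · exact absurd h hcp
  · intro hr
    ext
    show r • (y : M) = 0
    rw [← hc, ← mul_smul]
    rw [← Submodule.mem_annihilator_span_singleton, hx]
    exact Ideal.mul_mem_right _ _ hr

/-- An associated prime of `M` is an associated prime of a submodule `K` or of `M ⧸ K`. -/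
lemma aux_assoc_or (K : Submodule R M) {q : Ideal R} (hq : IsAssociatedPrime q M) :
    IsAssociatedPrime q K ∨ IsAssociatedPrime q (M ⧸ K) := by
  obtain ⟨hq1, x, rfl⟩ := aux_isAssociatedPrime_iff.mp hq
  by_cases hb : (Submodule.span R ({x} : Set M)) ⊓ K = ⊥
  · right
    refine aux_isAssociatedPrime_iff.mpr ⟨hq1, Submodule.Quotient.mk x, ?_⟩
    ext r
    rw [Submodule.mem_annihilator_span_singleton, Submodule.mem_annihilator_span_singleton]
    constructor
    · intro hr
      show (Submodule.Quotient.mk (r • x) : M ⧸ K) = 0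
      rw [hr, Submodule.Quotient.mk_zero]
    · intro hr
      have hr' : (Submodule.Quotient.mk (r • x) : M ⧸ K) = 0 := hr
      rw [Submodule.Quotient.mk_eq_zero] at hr'
      have hm : r • x ∈ Submodule.span R ({x} : Set M) ⊓ K :=
        ⟨Submodule.smul_mem _ _ (Submodule.mem_span_singleton_self x), hr'⟩
      rw [hb] at hm
      exact hm
  · left
    obtain ⟨y, hy, hy0⟩ := Submodule.exists_mem_ne_zero_of_ne_bot hb
    obtain ⟨c, hc⟩ := Submodule.mem_span_singleton.mp hy.1
    have hcq : c ∉ (Submodule.span R ({x} : Set M)).annihilator := by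
      intro hcq
      rw [Submodule.mem_annihilator_span_singleton] at hcq
      rw [← hc] at hy0
      exact hy0 hcq
    refine aux_isAssociatedPrime_iff.mpr ⟨hq1, ⟨y, (Submodule.mem_inf.mp hy).2⟩, ?_⟩
    ext r
    constructor
    · intro hr
      rw [Submodule.mem_annihilator_span_singleton]
      ext
      show r • y = 0
      rw [← hc, ← mul_smul, ← Submodule.mem_annihilator_span_singleton]
      exact Ideal.mul_mem_right _ _ hr
    · intro hr
      rw [Submodule.mem_annihilator_span_singleton] at hr
      have h2 : (r * c) • x = 0 := by
        rw [mul_smul, hc]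
        exact congrArg Subtype.val hr
      rw [← Submodule.mem_annihilator_span_singleton] at h2
      rcases hq1.mem_or_mem h2 with h | h
      · exact h
      · exact absurd h hcq

end AuxAss

/-- Finiteness of the set of associated primes of a Noetherian ring. -/
lemma aux_assFinite (A : Type*) [CommRing A] [IsNoetherianRing A] :
    (associatedPrimes A A).Finite := by
  have key : ∀ N : Submodule A A, (associatedPrimes A (A ⧸ N)).Finite := by
    intro N
    induction N using IsNoetherian.induction with
    | _ N ih =>
      by_cases hN : N = ⊤
      · subst hN
        haveI : Subsingleton (A ⧸ (⊤ : Submodule A A)) :=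
          Submodule.Quotient.subsingleton_iff.mpr rfl
        rw [associatedPrimes.eq_empty_of_subsingleton]
        exact Set.finite_empty
      · haveI : Nontrivial (A ⧸ N) :=
          Submodule.Quotient.nontrivial_iff.mpr hN
        obtain ⟨p, hp⟩ := associatedPrimes.nonempty A (A ⧸ N)
        obtain ⟨hp1, xb, hpx⟩ := aux_isAssociatedPrime_iff.mp hp
        obtain ⟨x, rfl⟩ := Submodule.Quotient.mk_surjective N xb
        have hx0 : (Submodule.Quotient.mk x : A ⧸ N) ≠ 0 := by
          intro h0
          apply hp1.ne_top
          rw [hpx, h0]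
          simp [Submodule.annihilator_bot]
        have hxN : x ∉ N := by rwa [Ne, Submodule.Quotient.mk_eq_zero] at hx0
        have hlt : N < N ⊔ Submodule.span A ({x} : Set A) := by
          refine lt_of_le_of_ne le_sup_left ?_
          intro hEq
          apply hxN
          rw [hEq]
          exact Submodule.mem_sup_right (Submodule.mem_span_singleton_self x)
        have hfin := ih _ hlt
        apply Set.Finite.subset (hfin.insert p)
        intro q hq
        rcases aux_assoc_or (Submodule.span A ({Submodule.Quotient.mk x} : Set (A ⧸ N))) hq
          with h1 | h2
        · exact Set.mem_insert_iff.mpr (Or.inl (aux_assoc_span_singleton hp1 hpx.symm h1))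
        · refine Set.mem_insert_iff.mpr (Or.inr ?_)
          have hmap : (Submodule.span A ({x} : Set A)).map N.mkQ
              = Submodule.span A ({Submodule.Quotient.mk x} : Set (A ⧸ N)) := by
            rw [Submodule.map_span, Set.image_singleton]
            rfl
          have e : ((A ⧸ N) ⧸ (Submodule.span A ({x} : Set A)).map N.mkQ) ≃ₗ[A]
              A ⧸ (N ⊔ Submodule.span A ({x} : Set A)) :=
            Submodule.quotientQuotientEquivQuotientSup N (Submodule.span A ({x} : Set A))
          rw [← LinearEquiv.AssociatedPrimes.eq e]
          rw [← hmap] at h2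
          exact h2
  have e : (A ⧸ (⊥ : Submodule A A)) ≃ₗ[A] A := Submodule.quotEquivOfEqBot ⊥ rfl
  rw [← LinearEquiv.AssociatedPrimes.eq e]
  exact key ⊥

/-- if the trace ideal of an ideal `I` of a commutative Noetherian ring
contains a nonzerodivisor, then so does `I`. -/
theorem regular_of_traceIdeal_regular (A : Type u) [CommRing A] [IsNoetherianRing A]
    (I : Ideal A) (h : ∃ a ∈ traceIdeal A I, a ∈ nonZeroDivisors A) :
    ∃ a ∈ I, a ∈ nonZeroDivisors A := by
  obtain ⟨a, haT, haR⟩ := h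
  rcases subsingleton_or_nontrivial A with hA | hA
  · exact ⟨0, I.zero_mem, ⟨fun x _ => Subsingleton.elim x 0, fun x _ => Subsingleton.elim x 0⟩⟩
  by_contra hcon
  push_neg at hcon
  have hsub : (I : Set A) ⊆ ⋃ p ∈ associatedPrimes A A, (p : Set A) := by
    rw [biUnion_associatedPrimes_eq_zero_divisors]
    intro r hr
    have h1 := hcon r hr
    rw [mem_nonZeroDivisors_iff_right] at h1
    push_neg at h1
    obtain ⟨x, hx1, hx2⟩ := h1
    exact ⟨x, hx2, by rwa [smul_eq_mul, mul_comm]⟩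
  have hfin := aux_assFinite A
  have hsub2 : (I : Set A) ⊆ ⋃ p ∈ hfin.toFinset, ((id p : Ideal A) : Set A) := by
    intro r hr
    have h2 := hsub hr
    simp only [Set.mem_iUnion, Set.Finite.mem_toFinset, id] at h2 ⊢
    exact h2
  have hprime : ∀ p ∈ hfin.toFinset, p ≠ (⊥ : Ideal A) → p ≠ (⊥ : Ideal A) →
      (id p : Ideal A).IsPrime := fun p hp _ _ => (hfin.mem_toFinset.mp hp).isPrime
  obtain ⟨p, hps, hIp⟩ :=
    (Ideal.subset_union_prime (⊥ : Ideal A) (⊥ : Ideal A) hprime).mp hsub2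
  obtain ⟨hp1, x, hpx⟩ := aux_isAssociatedPrime_iff.mp (hfin.mem_toFinset.mp hps)
  have hx0 : x ≠ 0 := by
    intro h0
    apply hp1.ne_top
    rw [hpx, h0]
    rw [show Submodule.span A ({(0 : A)} : Set A) = ⊥ from
      Submodule.span_singleton_eq_bot.mpr rfl, Submodule.annihilator_bot]
  replace hIp : I ≤ p := hIp
  have hann : ∀ y ∈ I, y * x = 0 := by
    intro y hy
    have h3 := hIp hy
    rw [hpx, Submodule.mem_annihilator_span_singleton, smul_eq_mul] at h3
    exact h3
  have hTp : traceIdeal A I ≤ p := by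
    show (⨆ f : I →ₗ[A] A, LinearMap.range f) ≤ p
    refine iSup_le fun f => ?_
    rintro b ⟨y, rfl⟩
    rw [hpx, Submodule.mem_annihilator_span_singleton, smul_eq_mul]
    have hy0 : (x • y : ↥I) = 0 := by
      apply Subtype.ext
      show x • (y : A) = 0
      rw [smul_eq_mul, mul_comm]
      exact hann _ y.2
    have h1 : x • f y = 0 := by rw [← map_smul, hy0, map_zero]
    rw [smul_eq_mul] at h1
    rw [mul_comm]
    exact h1
  have hap : a ∈ p := hTp haT
  rw [hpx, Submodule.mem_annihilator_span_singleton, smul_eq_mul] at hap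
  refine hx0 (mem_nonZeroDivisors_iff_right.mp haR x ?_)
  rwa [mul_comm] at hap
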